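/- arXiv:2001.00291 — 8 statements merged into one kernel-verified Lean document; each statement's English description precedes it below -/
import Mathlib

section
/- For p ∈ (0,1) and q = 1−p with p ≠ 1/2, and integer n ≥ 3, the vector π on {0,1,…,n−1} with π_0 = 1/(2 + n·p·q·(p^{n−2}−q^{n−2})/(p^n−q^n)) and π_i = Π_i·π_0 where Π_i = −[(p/q)((p/q)^{n−2}−1)/((p/q)^n−1)]·((p/q)^i−1) + (p/q)^{i−1} for 1 ≤ i ≤ n−1, is the unique stationary distribution of the random walk on the n-cycle whose transition probabilities are: from state 0, move to state 1 with probability q and to state n−1 with probability p; from state i (1 ≤ i ≤ n−1), move to state i+1 mod n with probability p and to state i−1 with probability q. -/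
set_option maxHeartbeats 1000000 in

/-- explicit unique stationary distribution of the random walk on
the `n`-cycle where from state `0` one moves up with probability `q` and down
with probability `p`, and from every other state up with probability `p` and
down with probability `q` (Example 3 of the paper). -/
theorem cycle_stationary_example3 (n : ℕ) [NeZero n] (hn : 3 ≤ n)
    (p : ℝ) (hp : p ∈ Set.Ioo (0:ℝ) 1) (hphalf : p ≠ 1/2)
    (q : ℝ) (hq : q = 1 - p)
    (P : Fin n → Fin n → ℝ)
    (hP : ∀ i j, P i j = (if j = i + 1 then (if i = 0 then q else p) else 0)
                        + (if j = i - 1 then (if i = 0 then p else q) else 0))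
    (Pi : ℕ → ℝ) (hPi0 : Pi 0 = 1)
    (hPi : ∀ i, 1 ≤ i → i ≤ n - 1 →
      Pi i = -((p/q) * ((p/q)^(n-2) - 1) / ((p/q)^n - 1)) * ((p/q)^i - 1)
              + (p/q)^(i-1))
    (π : Fin n → ℝ)
    (hπ : ∀ i : Fin n,
      π i = Pi (i : ℕ) * (1 / (2 + n * p * q * (p^(n-2) - q^(n-2)) / (p^n - q^n)))) :
    ((∀ i, 0 ≤ π i) ∧ (∑ i, π i) = 1 ∧ ∀ j, ∑ i, π i * P i j = π j)
    ∧ ∀ π' : Fin n → ℝ,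
        (∀ i, 0 ≤ π' i) → (∑ i, π' i) = 1 → (∀ j, ∑ i, π' i * P i j = π' j) →
        π' = π := by
  obtain ⟨N, rfl⟩ : ∃ N, n = N + 3 := ⟨n - 3, by omega⟩
  obtain ⟨hp0, hp1⟩ := hp
  have hq0 : 0 < q := by rw [hq]; linarith
  have hq1 : q ≠ 0 := hq0.ne'
  have hp_ne : p ≠ 0 := hp0.ne'
  simp only [show N+3-2 = N+1 from rfl, show N+3-1 = N+2 from rfl] at hPi hπ
  obtain ⟨r, hr⟩ : ∃ x : ℝ, x = p / q := ⟨_, rfl⟩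
  simp only [← hr] at hPi
  have hr0 : 0 < r := hr ▸ div_pos hp0 hq0
  have h1r : (0:ℝ) < 1 + r := by linarith
  have h1r' : (1:ℝ) + r ≠ 0 := h1r.ne'
  have hq' : q = 1 / (1 + r) := by rw [hr]; field_simp; linarith
  have hp' : p = r / (1 + r) := by rw [hr]; field_simp; linarith
  have hr1 : r ≠ 1 := by
    intro h
    apply hphalf
    have h1 : p / q = 1 := by rw [← hr, h]
    have h2 : p = q := (div_eq_one_iff_eq hq1).1 h1
    rw [hq] at h2; linarith
  have hrm1 : r - 1 ≠ 0 := sub_ne_zero.2 hr1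
  have hpow : ∀ m : ℕ, r ^ (m+1) - 1 ≠ 0 := by
    intro m
    rcases lt_or_gt_of_ne hr1 with h | h
    · have : r ^ (m+1) < 1 := pow_lt_one₀ hr0.le h (Nat.succ_ne_zero m)
      linarith
    · have : 1 < r ^ (m+1) := one_lt_pow₀ h (Nat.succ_ne_zero m)
      linarith
  obtain ⟨A, hA⟩ : ∃ x : ℝ, x = r * (r ^ (N+1) - 1) / (r ^ (N+3) - 1) := ⟨_, rfl⟩
  simp only [← hA] at hPi
  have PiE : ∀ m, m ≤ N+1 → Pi (m+1) = -A * (r^(m+1) - 1) + r^m := by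
    intro m hm
    exact hPi (m+1) (by omega) (by omega)
  have hApos : 0 < A := by
    rcases lt_or_gt_of_ne hr1 with h | h
    · have h1 : r ^ (N+1) < 1 := pow_lt_one₀ hr0.le h (Nat.succ_ne_zero N)
      have h2 : r ^ (N+3) < 1 := pow_lt_one₀ hr0.le h (by omega)
      rw [hA]
      apply div_pos_iff.mpr
      right
      exact ⟨by nlinarith, by linarith⟩
    · have h1 : 1 < r ^ (N+1) := one_lt_pow₀ h (Nat.succ_ne_zero N)
      have h2 : 1 < r ^ (N+3) := one_lt_pow₀ h (by omega)
      rw [hA]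
      exact div_pos (by nlinarith) (by linarith)
  have hSpos : 0 < 2 + ((N:ℝ)+3) * A := by
    have hN : (0:ℝ) ≤ N := Nat.cast_nonneg N
    nlinarith
  have hbig : (2 + ((N+3:ℕ):ℝ) * p * q * (p^(N+1) - q^(N+1)) / (p^(N+3) - q^(N+3)))
      = 2 + ((N:ℝ)+3) * A := by
    have hpq : p = q * r := by rw [hr]; field_simp
    have e1 : p^(N+1) - q^(N+1) = q^(N+1) * (r^(N+1) - 1) := by rw [hpq, mul_pow]; ring
    have e2 : p^(N+3) - q^(N+3) = q^(N+3) * (r^(N+3) - 1) := by rw [hpq, mul_pow]; ring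
    have hne2 : r ^ (N+3) - 1 ≠ 0 := hpow (N+2)
    rw [e1, e2, hpq, hA]
    push_cast
    field_simp
    ring
  obtain ⟨cS, hcS⟩ : ∃ x : ℝ, x = 1 / (2 + ((N:ℝ)+3) * A) := ⟨_, rfl⟩
  simp only [hbig, ← hcS] at hπ
  -- now hπ : ∀ i, π i = Pi i.val * cS
  have hcSpos : 0 < cS := by rw [hcS]; exact one_div_pos.2 hSpos
  -- nonnegativity of Pi
  have hPiNN : ∀ k, k ≤ N+2 → 0 ≤ Pi k := by
    intro k hk
    match k with
    | 0 => rw [hPi0]; norm_num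
    | (m+1) =>
      have hm : m ≤ N+1 := by omega
      have hPiv : Pi (m+1) = A + r^m * (1 - A*r) := by
        rw [PiE m hm]; ring
      rcases le_or_gt (A*r) 1 with hAr | hAr
      · rw [hPiv]
        have : 0 ≤ r^m * (1 - A*r) := mul_nonneg (pow_nonneg hr0.le m) (by linarith)
        linarith
      · have hrgt : 1 < r := by
          rcases lt_or_gt_of_ne hr1 with h | h
          · exfalso
            have key : A*r - 1 = (1 - r^2) / (r^(N+3) - 1) := by
              rw [hA]; field_simp [hpow (N+2)]; ring
            have h2 : r ^ (N+3) < 1 := pow_lt_one₀ hr0.le h (by omega)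
            have h3 : (0:ℝ) < 1 - r^2 := by nlinarith
            have h4 : (1 - r^2) / (r^(N+3) - 1) < 0 :=
              div_neg_of_pos_of_neg h3 (by linarith)
            linarith
          · exact h
        have hle : r^m ≤ r^(N+1) := pow_le_pow_right₀ hrgt.le (by omega)
        have h5 : r^(N+1) * (1 - A*r) ≤ r^m * (1 - A*r) :=
          mul_le_mul_of_nonpos_right hle (by linarith)
        have hden : 0 < r^(N+3) - 1 := by
          have := one_lt_pow₀ hrgt (show N+3 ≠ 0 by omega)
          linarith
        have T_eq : A + r^(N+1) * (1 - A*r)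
            = (r^(N+2) + r^(N+3) - r - r^(N+1)) / (r^(N+3) - 1) := by
          rw [hA]; field_simp [hpow (N+2)]; ring
        have hnum : 0 ≤ r^(N+2) + r^(N+3) - r - r^(N+1) := by
          have h6 : r^1 ≤ r^(N+2) := pow_le_pow_right₀ hrgt.le (by omega)
          have h7 : r^(N+1) ≤ r^(N+3) := pow_le_pow_right₀ hrgt.le (by omega)
          rw [pow_one] at h6
          linarith
        have hT : 0 ≤ A + r^(N+1) * (1 - A*r) := by
          rw [T_eq]; exact div_nonneg hnum hden.le
        rw [hPiv]; linarith
  -- sum of Pi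
  have hSsum : ∑ k ∈ Finset.range (N+3), Pi k = 2 + ((N:ℝ)+3) * A := by
    rw [Finset.sum_range_succ']
    have ee : ∀ k ∈ Finset.range (N+2), Pi (k+1) = A + (1 - A*r) * r^k := by
      intro k hk
      rw [PiE k (by have := Finset.mem_range.1 hk; omega)]; ring
    rw [Finset.sum_congr rfl ee, Finset.sum_add_distrib, Finset.sum_const,
      ← Finset.mul_sum, geom_sum_eq (fun h => hrm1 (by rw [h]; ring)), hPi0]
    have key : (1 - A*r) * ((r^(N+2)-1)/(r-1)) = 1 + A := by
      rw [hA]; field_simp [hpow (N+2)]; ring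
    rw [key, Finset.card_range]
    push_cast
    ring
  -- Fin index helpers
  have hsubv : ∀ (k : ℕ) (hk : k < N+3),
      ((⟨k,hk⟩ : Fin (N+3)) - 1).val = if k = 0 then N+2 else k-1 := by
    intro k hk
    simp only [Fin.sub_def, Fin.val_one']
    rw [Nat.mod_eq_of_lt (show 1 < N+3 by omega)]
    split_ifs with h
    · subst h; exact Nat.mod_eq_of_lt (by omega)
    · rw [show N + 3 - 1 + k = (k-1) + (N+3) by omega, Nat.add_mod_right,
        Nat.mod_eq_of_lt (by omega)]
  have haddv : ∀ (k : ℕ) (hk : k < N+3),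
      ((⟨k,hk⟩ : Fin (N+3)) + 1).val = if k = N+2 then 0 else k+1 := by
    intro k hk
    simp only [Fin.add_def, Fin.val_one']
    rw [Nat.mod_eq_of_lt (show 1 < N+3 by omega)]
    split_ifs with h
    · subst h; simp
    · exact Nat.mod_eq_of_lt (by omega)
  -- sum over two neighbours
  have sum_two : ∀ (f : Fin (N+3) → ℝ) (j : Fin (N+3)), ∑ i, f i * P i j
      = f (j-1) * (if j-1 = 0 then q else p) + f (j+1) * (if j+1 = 0 then p else q) := by
    intro f j
    have hc1 : ∀ i : Fin (N+3), (j = i + 1) ↔ (i = j - 1) := by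
      intro i; constructor
      · rintro rfl; simp
      · rintro rfl; simp
    have hc2 : ∀ i : Fin (N+3), (j = i - 1) ↔ (i = j + 1) := by
      intro i; constructor
      · rintro rfl; simp
      · rintro rfl; simp
    have expand : ∀ i : Fin (N+3), f i * P i j
        = (if i = j-1 then f (j-1) * (if j-1=0 then q else p) else 0)
        + (if i = j+1 then f (j+1) * (if j+1=0 then p else q) else 0) := by
      intro i
      rw [hP i j, mul_add]
      congr 1
      · by_cases h : i = j - 1
        · rw [if_pos ((hc1 i).2 h), if_pos h, h]
        · rw [if_neg (fun hh => h ((hc1 i).1 hh)), if_neg h, mul_zero]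
      · by_cases h : i = j + 1
        · rw [if_pos ((hc2 i).2 h), if_pos h, h]
        · rw [if_neg (fun hh => h ((hc2 i).1 hh)), if_neg h, mul_zero]
    rw [Finset.sum_congr rfl (fun i _ => expand i), Finset.sum_add_distrib,
      Finset.sum_ite_eq' Finset.univ (j-1), Finset.sum_ite_eq' Finset.univ (j+1)]
    simp
  -- the bridge between Fin-level balance and ℕ-level balance
  have nbEq : ∀ (f : Fin (N+3) → ℝ) (g : ℕ → ℝ), (∀ i : Fin (N+3), f i = g i.val) →
      ∀ (k : ℕ) (hk : k < N+3),
      ((∑ i, f i * P i ⟨k,hk⟩ = f ⟨k,hk⟩) ↔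
      (g k = g (if k = 0 then N+2 else k-1) * (if k = 1 then q else p)
           + g (if k = N+2 then 0 else k+1) * (if k = N+2 then p else q))) := by
    intro f g hfg k hk
    have c1 : ((⟨k,hk⟩ : Fin (N+3)) - 1 = 0) ↔ k = 1 := by
      rw [Fin.ext_iff, hsubv k hk, Fin.val_zero]
      split_ifs with h
      · simp [h]
      · omega
    have c2 : ((⟨k,hk⟩ : Fin (N+3)) + 1 = 0) ↔ k = N+2 := by
      rw [Fin.ext_iff, haddv k hk, Fin.val_zero]
      split_ifs with h
      · simp [h]
      · simp [h]
    rw [sum_two f ⟨k,hk⟩, hfg, hfg, hfg, hsubv k hk, haddv k hk,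
      if_congr c1 rfl rfl, if_congr c2 rfl rfl]
    exact eq_comm
  -- ℕ-level balance equations for Pi
  have e0 : Pi 0 = Pi (N+2) * p + Pi 1 * q := by
    rw [hPi0, PiE (N+1) le_rfl, PiE 0 (by omega)]
    simp only [hA, hp', hq']
    field_simp [hpow (N+2)]
    ring
  have e1 : Pi 1 = Pi 0 * q + Pi 2 * q := by
    rw [hPi0, PiE 0 (by omega), PiE 1 (by omega)]
    simp only [hA, hp', hq']
    field_simp [hpow (N+2)]
    ring
  have emid : ∀ m, m + 2 ≤ N+1 → Pi (m+2) = Pi (m+1) * p + Pi (m+3) * q := by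
    intro m hm
    rw [PiE (m+1) (by omega), PiE m (by omega), PiE (m+2) (by omega)]
    simp only [hA, hp', hq']
    field_simp [hpow (N+2)]
    ring
  have eend : Pi (N+2) = Pi (N+1) * p + Pi 0 * p := by
    rw [hPi0, PiE (N+1) le_rfl, PiE N (by omega)]
    simp only [hA, hp', hq']
    field_simp [hpow (N+2)]
    ring
  -- ℕ-level balance for G := Pi · cS
  obtain ⟨G, hGdef⟩ : ∃ G : ℕ → ℝ, G = fun k => Pi k * cS := ⟨_, rfl⟩
  have hGk : ∀ k, G k = Pi k * cS := fun k => by rw [hGdef]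
  have hNBG : ∀ (k : ℕ), k < N+3 →
      G k = G (if k = 0 then N+2 else k-1) * (if k = 1 then q else p)
          + G (if k = N+2 then 0 else k+1) * (if k = N+2 then p else q) := by
    intro k hk
    rcases Nat.lt_or_ge k 2 with h2 | h2
    · interval_cases k
      · rw [if_pos rfl, if_neg (by omega : ¬(0:ℕ) = 1),
          if_neg (by omega : ¬(0:ℕ) = N+2), if_neg (by omega : ¬(0:ℕ) = N+2)]
        show G 0 = G (N+2) * p + G 1 * q
        rw [hGk, hGk, hGk]
        linear_combination cS * e0
      · rw [if_neg (by omega : ¬(1:ℕ) = 0), if_pos rfl,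
          if_neg (by omega : ¬(1:ℕ) = N+2), if_neg (by omega : ¬(1:ℕ) = N+2)]
        show G 1 = G 0 * q + G 2 * q
        rw [hGk, hGk, hGk]
        linear_combination cS * e1
    · rcases Nat.lt_or_ge k (N+2) with h3 | h3
      · obtain ⟨m, rfl⟩ : ∃ m, k = m + 2 := ⟨k-2, by omega⟩
        rw [if_neg (by omega : ¬m+2 = 0), if_neg (by omega : ¬m+2 = 1),
          if_neg (by omega : ¬m+2 = N+2), if_neg (by omega : ¬m+2 = N+2)]
        show G (m+2) = G (m+1) * p + G (m+3) * q
        rw [hGk, hGk, hGk]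
        linear_combination cS * emid m (by omega)
      · obtain rfl : k = N+2 := by omega
        rw [if_neg (by omega : ¬N+2 = 0), if_neg (by omega : ¬N+2 = 1),
          if_pos rfl, if_pos rfl]
        show G (N+2) = G (N+1) * p + G 0 * p
        rw [hGk, hGk, hGk]
        linear_combination cS * eend
  have hπG : ∀ i : Fin (N+3), π i = G i.val := by
    intro i; rw [hπ i, hGk]
  -- part 1 : nonnegativity
  have part1 : ∀ i, 0 ≤ π i := by
    intro i
    rw [hπ i]
    exact mul_nonneg (hPiNN i.val (by have := i.isLt; omega)) hcSpos.le
  -- part 2 : sums to one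
  have part2 : ∑ i, π i = 1 := by
    have h1 : ∑ i, π i = ∑ i : Fin (N+3), G i.val :=
      Finset.sum_congr rfl fun i _ => hπG i
    rw [h1, Fin.sum_univ_eq_sum_range G (N+3)]
    have h2 : ∑ k ∈ Finset.range (N+3), G k
        = (∑ k ∈ Finset.range (N+3), Pi k) * cS := by
      rw [Finset.sum_mul]
      exact Finset.sum_congr rfl fun k _ => hGk k
    rw [h2, hSsum, hcS]
    field_simp
  -- part 3 : stationarity
  have part3 : ∀ j : Fin (N+3), ∑ i, π i * P i j = π j := by
    intro j
    obtain ⟨k, hk⟩ := j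
    exact (nbEq π G hπG k hk).2 (hNBG k hk)
  refine ⟨⟨part1, part2, part3⟩, ?_⟩
  -- uniqueness
  intro π' hnn' hsum' hstat'
  obtain ⟨g', hg'⟩ : ∃ g : ℕ → ℝ, ∀ (k : ℕ) (h : k < N+3), g k = π' ⟨k,h⟩ :=
    ⟨fun k => if h : k < N+3 then π' ⟨k,h⟩ else 0, fun k h => dif_pos h⟩
  have hcompat' : ∀ i : Fin (N+3), π' i = g' i.val := by
    intro i
    rw [hg' i.val i.isLt]
  have hNB' : ∀ (k : ℕ), k < N+3 →
      g' k = g' (if k = 0 then N+2 else k-1) * (if k = 1 then q else p)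
           + g' (if k = N+2 then 0 else k+1) * (if k = N+2 then p else q) :=
    fun k hk => (nbEq π' g' hcompat' k hk).1 (hstat' ⟨k,hk⟩)
  obtain ⟨D, hDdef⟩ : ∃ D : ℕ → ℝ, D = fun k => g' k - G k := ⟨_, rfl⟩
  have hDk : ∀ k, D k = g' k - G k := fun k => by rw [hDdef]
  have hNBD : ∀ (k : ℕ), k < N+3 →
      D k = D (if k = 0 then N+2 else k-1) * (if k = 1 then q else p)
          + D (if k = N+2 then 0 else k+1) * (if k = N+2 then p else q) := by
    intro k hk
    rw [hDk, hDk, hDk]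
    linear_combination (hNB' k hk) - (hNBG k hk)
  have hsumD : ∑ k ∈ Finset.range (N+3), D k = 0 := by
    have h1 : ∑ k ∈ Finset.range (N+3), g' k = 1 := by
      rw [← Fin.sum_univ_eq_sum_range g' (N+3), ← hsum']
      exact Finset.sum_congr rfl fun i _ => (hcompat' i).symm
    have h2 : ∑ k ∈ Finset.range (N+3), G k = 1 := by
      rw [← Fin.sum_univ_eq_sum_range G (N+3), ← part2]
      exact Finset.sum_congr rfl fun i _ => (hπG i).symm
    rw [Finset.sum_congr rfl (fun k _ => hDk k), Finset.sum_sub_distrib, h1, h2,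
      sub_self]
  -- specialized difference equations
  have E0 : D 0 = D (N+2) * p + D 1 * q := by
    have h := hNBD 0 (by omega)
    rw [if_pos rfl, if_neg (by omega : ¬(0:ℕ) = 1),
      if_neg (by omega : ¬(0:ℕ) = N+2), if_neg (by omega : ¬(0:ℕ) = N+2)] at h
    exact h
  have E1 : D 1 = D 0 * q + D 2 * q := by
    have h := hNBD 1 (by omega)
    rw [if_neg (by omega : ¬(1:ℕ) = 0), if_pos rfl,
      if_neg (by omega : ¬(1:ℕ) = N+2), if_neg (by omega : ¬(1:ℕ) = N+2)] at h
    exact h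
  have Emid : ∀ m, m + 2 ≤ N+1 → D (m+2) = D (m+1) * p + D (m+3) * q := by
    intro m hm
    have h := hNBD (m+2) (by omega)
    rw [if_neg (by omega : ¬m+2 = 0), if_neg (by omega : ¬m+2 = 1),
      if_neg (by omega : ¬m+2 = N+2), if_neg (by omega : ¬m+2 = N+2)] at h
    exact h
  -- solve the linear recurrence
  obtain ⟨β, hβ⟩ : ∃ x : ℝ, x = (D 1 - (q/p) * D 0) / (r - 1) := ⟨_, rfl⟩
  obtain ⟨α, hα⟩ : ∃ x : ℝ, x = (q/p) * D 0 - β := ⟨_, rfl⟩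
  have hαβr : α + β * r = D 1 := by
    rw [hα, hβ]
    field_simp
    ring
  have hD0 : D 0 = r * (α + β) := by
    rw [hα, hr]
    field_simp
    ring
  have claim : ∀ j, 1 ≤ j → j ≤ N+2 → D j = α + β * r^j := by
    intro j
    induction j using Nat.strong_induction_on with
    | _ j ih =>
      match j with
      | 0 => intro h _; omega
      | 1 =>
        intro _ _
        rw [pow_one, hαβr]
      | 2 =>
        intro _ _
        have h2 : D 2 = (D 1 - D 0 * q) / q := by
          rw [eq_div_iff hq1]; linarith [E1]
        rw [h2, ← hαβr, hD0, hq']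
        field_simp
        ring
      | (m+3) =>
        intro _ hle
        have ih1 : D (m+1) = α + β * r^(m+1) :=
          ih (m+1) (by omega) (by omega) (by omega)
        have ih2 : D (m+2) = α + β * r^(m+2) :=
          ih (m+2) (by omega) (by omega) (by omega)
        have h3 : D (m+3) = (D (m+2) - D (m+1) * p) / q := by
          rw [eq_div_iff hq1]; linarith [Emid m (by omega)]
        rw [h3, ih1, ih2, hp', hq']
        field_simp
        ring
  -- relation between α and β from balance at 0
  have hsq : r^2 - 1 ≠ 0 := by
    rcases lt_or_gt_of_ne hr1 with h | h
    · nlinarith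
    · nlinarith
  obtain ⟨K, hK⟩ : ∃ x : ℝ, x = r^2 * (r^(N+1) - 1) / (r^2 - 1) := ⟨_, rfl⟩
  have hαK : α = β * K := by
    have hDN2 : D (N+2) = α + β * r^(N+2) := claim (N+2) (by omega) (by omega)
    have heq0 : r * (α+β) = (α + β*r^(N+2)) * (r/(1+r)) + (α + β*r) * (1/(1+r)) := by
      rw [← hp', ← hq', ← hDN2, hαβr, ← hD0]
      exact E0
    field_simp at heq0
    rw [hK, show β * (r^2*(r^(N+1)-1)/(r^2-1)) = β * (r^2*(r^(N+1)-1))/(r^2-1) from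
      (mul_div_assoc _ _ _).symm, eq_div_iff hsq]
    linear_combination heq0
  have hKpos : 0 < K := by
    have hKeq : K = (r^2 / (1+r)) * ((r^(N+1) - 1) / (r - 1)) := by
      rw [hK, show r^2 - 1 = (r-1) * (r+1) from by ring]
      rw [div_mul_div_comm]
      congr 1
      ring
    rw [hKeq]
    apply mul_pos (div_pos (by positivity) h1r)
    rcases lt_or_gt_of_ne hr1 with h | h
    · have : r ^ (N+1) < 1 := pow_lt_one₀ hr0.le h (Nat.succ_ne_zero N)
      apply div_pos_iff.mpr
      right
      exact ⟨by linarith, by linarith⟩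
    · have : 1 < r ^ (N+1) := one_lt_pow₀ h (Nat.succ_ne_zero N)
      exact div_pos (by linarith) (by linarith)
  have hGgeo : 0 < (r^(N+2) - 1) / (r - 1) := by
    rcases lt_or_gt_of_ne hr1 with h | h
    · have : r ^ (N+2) < 1 := pow_lt_one₀ hr0.le h (by omega)
      apply div_pos_iff.mpr
      right
      exact ⟨by linarith, by linarith⟩
    · have : 1 < r ^ (N+2) := one_lt_pow₀ h (by omega)
      exact div_pos (by linarith) (by linarith)
  have hsum_eq : ∑ k ∈ Finset.range (N+3), D k
      = D 0 + (((N:ℝ)+2) * α + (β * r) * ((r^(N+2) - 1)/(r-1))) := by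
    rw [Finset.sum_range_succ']
    have ed : ∀ k ∈ Finset.range (N+2), D (k+1) = α + (β * r) * r^k := by
      intro k hk
      rw [claim (k+1) (by omega) (by have := Finset.mem_range.1 hk; omega)]
      ring
    rw [Finset.sum_congr rfl ed, Finset.sum_add_distrib, Finset.sum_const,
      ← Finset.mul_sum, geom_sum_eq (fun h => hrm1 (by rw [h]; ring)),
      Finset.card_range]
    push_cast
    ring
  have hβ0 : β = 0 := by
    have hz : D 0 + (((N:ℝ)+2) * α + (β * r) * ((r^(N+2) - 1)/(r-1))) = 0 := by
      rw [← hsum_eq]; exact hsumD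
    rw [hD0, hαK] at hz
    have hz2 : β * (r * (K + 1) + ((N:ℝ)+2) * K + r * ((r^(N+2) - 1)/(r-1))) = 0 := by
      linear_combination hz
    rcases mul_eq_zero.1 hz2 with h | h
    · exact h
    · exfalso
      have hN : (0:ℝ) ≤ N := Nat.cast_nonneg N
      have t1 : 0 < r * (K + 1) := mul_pos hr0 (by linarith)
      have t2 : 0 < ((N:ℝ)+2) * K := mul_pos (by linarith) hKpos
      have t3 : 0 < r * ((r^(N+2) - 1)/(r-1)) := mul_pos hr0 hGgeo
      linarith
  have hα0 : α = 0 := by rw [hαK, hβ0, zero_mul]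
  have hDzero : ∀ j, j ≤ N+2 → D j = 0 := by
    intro j hj
    match j with
    | 0 => rw [hD0, hα0, hβ0]; ring
    | (m+1) =>
      rw [claim (m+1) (by omega) hj, hα0, hβ0]
      ring
  funext i
  have hz := hDzero i.val (by have := i.isLt; omega)
  rw [hDk] at hz
  rw [hcompat' i, hπG i]
  linarith [hz]
end

section
/- For p ∈ (0,1), q := 1−p, p ≠ 1/2, n ≥ 3, p_0 ∈ (0,1), q_0 := 1−p_0: with Π_0 := 1 and Π_i := −[((p_0/q)(p/q)^{n−1} − q_0/q)/((p/q)^n − 1)]·((p/q)^i − 1) + (p_0/q)(p/q)^{i−1} for 1 ≤ i ≤ n−1, the sum Σ_{i=0}^{n−1} Π_i equals 1 − (p_0 − q_0)/(p − q) + n·(p_0·p^{n−1} − q_0·q^{n−1})/(p^n − q^n). -/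
/-- closed form for the sum of the stationary-distribution weights
`Π_i` in Example 2 (general `p₀`, constant `p` elsewhere). -/
theorem sum_Pi_example2 (n : ℕ) (hn : 3 ≤ n) (p p₀ : ℝ)
    (hp : p ∈ Set.Ioo (0:ℝ) 1) (hp0 : p₀ ∈ Set.Ioo (0:ℝ) 1) (hphalf : p ≠ 1/2)
    (q q₀ : ℝ) (hq : q = 1 - p) (hq0 : q₀ = 1 - p₀)
    (Pi : ℕ → ℝ) (hPi0 : Pi 0 = 1)
    (hPi : ∀ i, 1 ≤ i → i ≤ n - 1 →
      Pi i = -(((p₀/q) * (p/q)^(n-1) - q₀/q) / ((p/q)^n - 1)) * ((p/q)^i - 1)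
              + (p₀/q) * (p/q)^(i-1)) :
    ∑ i ∈ Finset.range n, Pi i
      = 1 - (p₀ - q₀)/(p - q) + n * (p₀ * p^(n-1) - q₀ * q^(n-1)) / (p^n - q^n) := by
  obtain ⟨hp0', hp1⟩ := hp
  have hqpos : 0 < q := by rw [hq]; linarith
  have hq0' : q ≠ 0 := ne_of_gt hqpos
  have hpq : p ≠ q := by rw [hq]; intro h; apply hphalf; linarith
  have hpqsub : p - q ≠ 0 := sub_ne_zero.mpr hpq
  have hr1 : p / q ≠ 1 := by
    intro h
    exact hpq (by field_simp at h; linarith)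
  have hrm1 : p / q - 1 ≠ 0 := sub_ne_zero.mpr hr1
  have hpqn : p ^ n - q ^ n ≠ 0 := by
    rcases lt_or_gt_of_ne hpq with h | h
    · exact sub_ne_zero.mpr (ne_of_lt (pow_lt_pow_left₀ h hp0'.le (by omega)))
    · exact sub_ne_zero.mpr (ne_of_gt (pow_lt_pow_left₀ h hqpos.le (by omega)))
  have hrn : (p / q) ^ n - 1 ≠ 0 := by
    rw [div_pow]
    intro h
    have h1 : p ^ n / q ^ n = 1 := by linarith
    rw [div_eq_one_iff_eq (pow_ne_zero n hq0')] at h1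
    exact hpqn (by rw [h1]; ring)
  obtain ⟨m, rfl⟩ : ∃ m, n = m + 1 := ⟨n - 1, by omega⟩
  have hm : 2 ≤ m := by omega
  set A : ℝ := ((p₀/q) * (p/q)^(m+1-1) - q₀/q) / ((p/q)^(m+1) - 1) with hA
  have hsplit : ∑ i ∈ Finset.range (m+1), Pi i
      = Pi 0 + ∑ j ∈ Finset.range m, Pi (j+1) := by
    rw [Finset.range_eq_Ico, ← Finset.sum_Ico_consecutive _ (Nat.zero_le 1) (by omega)]
    congr 1
    · simp
    · rw [Finset.sum_Ico_eq_sum_range]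
      simp [add_comm]
  rw [hsplit, hPi0]
  have hterm : ∀ j ∈ Finset.range m,
      Pi (j+1) = (-A * (p/q) + p₀/q) * (p/q)^j + A := by
    intro j hj
    rw [Finset.mem_range] at hj
    rw [hPi (j+1) (by omega) (by omega)]
    have h1 : j + 1 - 1 = j := by omega
    rw [h1]
    ring
  rw [Finset.sum_congr rfl hterm, Finset.sum_add_distrib, ← Finset.mul_sum,
    Finset.sum_const, Finset.card_range, geom_sum_eq hr1, nsmul_eq_mul]
  rw [hA]
  have hcast : ((m + 1 : ℕ) : ℝ) = (m : ℝ) + 1 := by push_cast; ring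
  have h2 : m + 1 - 1 = m := by omega
  rw [h2, hcast]
  have hdp : (p/q)^(m+1) = p^(m+1)/q^(m+1) := div_pow p q (m+1)
  have hdm : (p/q)^m = p^m/q^m := div_pow p q m
  rw [hq0] at *
  rw [div_pow, div_pow]
  have e1 : p / q - 1 = (p - q) / q := by field_simp
  have e2 : p ^ (m+1) / q ^ (m+1) - 1 = (p ^ (m+1) - q^(m+1)) / q ^ (m+1) := by field_simp
  rw [e1, e2]
  field_simp
  rw [hq]
  ring
end

section
/- For p ∈ (0,1), q := 1−p, p ≠ 1/2, n ≥ 3: with Π_0 := 1 and Π_i := −[(p/q)((p/q)^{n−2} − 1)/((p/q)^n − 1)]·((p/q)^i − 1) + (p/q)^{i−1} for 1 ≤ i ≤ n−1, the sum Σ_{i=0}^{n−1} Π_i equals 2 + n·p·q·(p^{n−2} − q^{n−2})/(p^n − q^n). -/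
/-- closed form for the sum of the stationary-distribution weights
`Π_i` in Example 3 (`p₀ = q`). -/
theorem sum_Pi_example3 (n : ℕ) (hn : 3 ≤ n) (p : ℝ)
    (hp : p ∈ Set.Ioo (0:ℝ) 1) (hphalf : p ≠ 1/2)
    (q : ℝ) (hq : q = 1 - p)
    (Pi : ℕ → ℝ) (hPi0 : Pi 0 = 1)
    (hPi : ∀ i, 1 ≤ i → i ≤ n - 1 →
      Pi i = -((p/q) * ((p/q)^(n-2) - 1) / ((p/q)^n - 1)) * ((p/q)^i - 1)
              + (p/q)^(i-1)) :
    ∑ i ∈ Finset.range n, Pi i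
      = 2 + n * p * q * (p^(n-2) - q^(n-2)) / (p^n - q^n) := by
  obtain ⟨k, rfl⟩ : ∃ k, n = k + 3 := ⟨n - 3, by omega⟩
  obtain ⟨hp0, hp1⟩ := hp
  have hq0 : 0 < q := by rw [hq]; linarith
  have hpq : p ≠ q := by
    intro h; apply hphalf; rw [hq] at h; linarith
  have hqne : q ≠ 0 := ne_of_gt hq0
  set r : ℝ := p / q with hr
  have hr0 : 0 < r := div_pos hp0 hq0
  have hr1 : r ≠ 1 := by
    intro h
    apply hpq
    rw [hr, div_eq_one_iff_eq hqne] at h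
    exact h
  have hrn : r ^ (k + 3) - 1 ≠ 0 := by
    rcases lt_or_gt_of_ne hr1 with h | h
    · have := pow_lt_one₀ hr0.le h (by omega : k + 3 ≠ 0)
      intro hc; nlinarith
    · have := one_lt_pow₀ h (by omega : k + 3 ≠ 0)
      intro hc; nlinarith
  have hpqn : p ^ (k + 3) - q ^ (k + 3) ≠ 0 := by
    rcases lt_or_gt_of_ne hpq with h | h
    · have := pow_lt_pow_left₀ h hp0.le (by omega : k + 3 ≠ 0)
      intro hc; nlinarith
    · have := pow_lt_pow_left₀ h hq0.le (by omega : k + 3 ≠ 0)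
      intro hc; nlinarith
  have hrm1 : r - 1 ≠ 0 := sub_ne_zero.mpr hr1
  set C : ℝ := r * (r ^ (k + 3 - 2) - 1) / (r ^ (k + 3) - 1) with hC
  have hsplit : ∑ i ∈ Finset.range (k + 3), Pi i
      = Pi 0 + ∑ i ∈ Finset.Ico 1 (k + 3), Pi i := by
    rw [Finset.range_eq_Ico,
      ← Finset.sum_Ico_consecutive _ (by omega : 0 ≤ 1) (by omega : 1 ≤ k + 3)]
    congr 1
    simp
  rw [hsplit, hPi0]
  have hcong : ∑ i ∈ Finset.Ico 1 (k + 3), Pi i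
      = ∑ i ∈ Finset.Ico 1 (k + 3), (-C * (r ^ i - 1) + r ^ (i - 1)) := by
    refine Finset.sum_congr rfl fun i hi => ?_
    rw [Finset.mem_Ico] at hi
    exact hPi i hi.1 (by omega)
  rw [hcong]
  have hsum1 : ∑ i ∈ Finset.Ico 1 (k + 3), r ^ i
      = r * ((r ^ (k + 2) - 1) / (r - 1)) := by
    rw [Finset.sum_Ico_eq_sum_range]
    have e : (k + 3) - 1 = k + 2 := rfl
    rw [e]
    calc ∑ x ∈ Finset.range (k + 2), r ^ (1 + x)
        = ∑ x ∈ Finset.range (k + 2), r * r ^ x := by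
          refine Finset.sum_congr rfl fun x _ => ?_
          rw [pow_add, pow_one]
      _ = r * ((r ^ (k + 2) - 1) / (r - 1)) := by
          rw [← Finset.mul_sum, geom_sum_eq hr1]
  have hsum2 : ∑ i ∈ Finset.Ico 1 (k + 3), r ^ (i - 1)
      = (r ^ (k + 2) - 1) / (r - 1) := by
    rw [Finset.sum_Ico_eq_sum_range]
    rw [← geom_sum_eq hr1 (k + 2)]
    refine Finset.sum_congr rfl fun i _ => ?_
    congr 1
    omega
  have hexp : ∑ i ∈ Finset.Ico 1 (k + 3), (-C * (r ^ i - 1) + r ^ (i - 1))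
      = -C * (∑ i ∈ Finset.Ico 1 (k + 3), r ^ i - (k + 2))
        + ∑ i ∈ Finset.Ico 1 (k + 3), r ^ (i - 1) := by
    rw [Finset.sum_add_distrib, ← Finset.mul_sum, Finset.sum_sub_distrib]
    simp [Nat.card_Ico]
  rw [hexp, hsum1, hsum2]
  have hRHS : (↑(k + 3) : ℝ) * p * q * (p ^ (k + 3 - 2) - q ^ (k + 3 - 2))
        / (p ^ (k + 3) - q ^ (k + 3)) = (↑(k + 3) : ℝ) * C := by
    rw [hC, hr]
    have e : (k + 3) - 2 = k + 1 := rfl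
    rw [e]
    have h2 : (p / q) ^ (k + 3) - 1 ≠ 0 := by rw [← hr]; exact hrn
    have h3 : (q ^ (k + 3) : ℝ) ≠ 0 := pow_ne_zero _ hqne
    rw [div_pow, div_pow, div_sub_one h3, div_sub_one (pow_ne_zero _ hqne)]
    field_simp
    ring
  rw [hRHS, hC]
  have e : (k + 3) - 2 = k + 1 := rfl
  rw [e]
  clear_value C
  clear_value r
  push_cast
  field_simp
  ring
end

section
/- Define μ(r, γ) := r·γ·(1−γ)·(2−γ)·((2−γ)^{r−2} − γ^{r−2}) / (2·((2−γ)^r − γ^r) + r·γ·(2−γ)·((2−γ)^{r−2} − γ^{r−2})) for integers r ≥ 3 and γ ∈ (0,1). With γ_r := 2/√r, one has (1 − μ(r, γ_r))·√r / 4 → 1 as r → ∞; equivalently, 1 − μ(r, γ_r) is asymptotic to 4/√r = 2γ_r. -/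
open Filter
set_option maxHeartbeats 1000000

noncomputable def Sf (n : ℕ) : ℝ := Real.sqrt n
noncomputable def Gf (n : ℕ) : ℝ := 2 / Sf n
noncomputable def Tf (n : ℕ) : ℝ := (Gf n / (2 - Gf n)) ^ (n - 2)
noncomputable def Uf (n : ℕ) : ℝ := (2 - Gf n) ^ 2 - (Gf n) ^ 2 * Tf n
noncomputable def Vf (n : ℕ) : ℝ := (2 - Gf n) * (1 - Tf n)
noncomputable def Hf (n : ℕ) : ℝ :=
  (2 * Uf n + 4 * Vf n) / (4 * (2 * Uf n * (Sf n)⁻¹ + 2 * Vf n))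

lemma limS : Tendsto Sf atTop atTop := by
  rw [tendsto_atTop_atTop]
  intro b
  refine ⟨(⌈b⌉₊ + 1) ^ 2, fun n hn => ?_⟩
  have h1 : (b : ℝ) ≤ ((⌈b⌉₊ + 1 : ℕ) : ℝ) := by
    push_cast
    have := Nat.le_ceil b
    linarith
  have h2 : (((⌈b⌉₊ + 1) ^ 2 : ℕ) : ℝ) ≤ (n : ℝ) := by exact_mod_cast hn
  calc b ≤ ((⌈b⌉₊ + 1 : ℕ) : ℝ) := h1
    _ = Real.sqrt ((((⌈b⌉₊ + 1) : ℕ) : ℝ) ^ 2) := (Real.sqrt_sq (by positivity)).symm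
    _ ≤ Sf n := by
        apply Real.sqrt_le_sqrt
        push_cast at h2 ⊢
        linarith

lemma limG : Tendsto Gf atTop (nhds 0) := by
  have h := limS.inv_tendsto_atTop
  have h2 : Tendsto (fun n => 2 * (Sf n)⁻¹) atTop (nhds (2 * 0)) := h.const_mul 2
  rw [show Gf = fun n => 2 * (Sf n)⁻¹ from funext fun n => by simp [Gf, div_eq_mul_inv]]
  simpa using h2

lemma sfacts {n : ℕ} (hn : 100 ≤ n) :
    10 ≤ Sf n ∧ 0 < Gf n ∧ Gf n ≤ 1/5 := by
  have h100 : (100 : ℝ) ≤ (n : ℝ) := by exact_mod_cast hn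
  have hs10 : (10 : ℝ) ≤ Sf n := by
    have h : (10 : ℝ) = Real.sqrt (10 ^ 2) := (Real.sqrt_sq (by norm_num)).symm
    rw [h]
    apply Real.sqrt_le_sqrt
    norm_num
    linarith
  have hs0 : 0 < Sf n := by linarith
  have hg0 : 0 < Gf n := by unfold Gf; exact div_pos (by norm_num) hs0
  refine ⟨hs10, hg0, ?_⟩
  unfold Gf
  rw [div_le_div_iff₀ hs0 (by norm_num)]
  linarith

lemma limT : Tendsto Tf atTop (nhds 0) := by
  apply squeeze_zero' (g := fun n => (1/2 : ℝ) ^ (n - 2))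
  · filter_upwards [eventually_ge_atTop 100] with n hn
    obtain ⟨hs10, hg0, hg1⟩ := sfacts hn
    exact pow_nonneg (div_nonneg hg0.le (by linarith)) _
  · filter_upwards [eventually_ge_atTop 100] with n hn
    obtain ⟨hs10, hg0, hg1⟩ := sfacts hn
    apply pow_le_pow_left₀ (div_nonneg hg0.le (by linarith))
    rw [div_le_div_iff₀ (by linarith) (by norm_num)]
    linarith
  · exact (tendsto_pow_atTop_nhds_zero_of_lt_one (by norm_num) (by norm_num)).comp
      (tendsto_sub_atTop_nat 2)

lemma limU : Tendsto Uf atTop (nhds 4) := by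
  have h : Tendsto Uf atTop (nhds ((2 - 0) ^ 2 - 0 ^ 2 * 0)) :=
    ((tendsto_const_nhds.sub limG).pow 2).sub ((limG.pow 2).mul limT)
  norm_num at h
  exact h

lemma limV : Tendsto Vf atTop (nhds 2) := by
  have h : Tendsto Vf atTop (nhds ((2 - 0) * (1 - 0))) :=
    (tendsto_const_nhds.sub limG).mul (tendsto_const_nhds.sub limT)
  norm_num at h
  exact h

lemma limH : Tendsto Hf atTop (nhds 1) := by
  have hw : Tendsto (fun n => (Sf n)⁻¹) atTop (nhds 0) := limS.inv_tendsto_atTop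
  have hnum : Tendsto (fun n => 2 * Uf n + 4 * Vf n) atTop (nhds (2 * 4 + 4 * 2)) :=
    (limU.const_mul 2).add (limV.const_mul 4)
  have hden : Tendsto (fun n => 4 * (2 * Uf n * (Sf n)⁻¹ + 2 * Vf n)) atTop
      (nhds (4 * (2 * 4 * 0 + 2 * 2))) :=
    (((limU.const_mul 2).mul hw).add (limV.const_mul 2)).const_mul 4
  have h := hnum.div hden (by norm_num)
  norm_num at h
  exact h

lemma eqKey (n : ℕ) (hn : 100 ≤ n) :
    (1 - (n * Gf n * (1 - Gf n) * (2 - Gf n) * ((2 - Gf n) ^ (n-2) - (Gf n) ^ (n-2))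
        / (2 * ((2 - Gf n) ^ n - (Gf n) ^ n)
            + n * Gf n * (2 - Gf n) * ((2 - Gf n) ^ (n-2) - (Gf n) ^ (n-2)))))
      * Sf n / 4 = Hf n := by
  obtain ⟨hs10, hg0, hg1⟩ := sfacts hn
  obtain ⟨m, rfl⟩ : ∃ m, n = m + 2 := ⟨n - 2, by omega⟩
  have hs0 : 0 < Sf (m + 2) := by linarith
  have hss : Sf (m + 2) * Sf (m + 2) = ((m + 2 : ℕ) : ℝ) :=
    Real.mul_self_sqrt (by positivity)
  set s := Sf (m + 2) with hs_def
  set γ := Gf (m + 2) with hγ_def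
  have ha0 : (0:ℝ) < 2 - γ := by linarith
  have hmm : m + 2 - 2 = m := by omega
  have ht_def : Tf (m + 2) = (γ / (2 - γ)) ^ m := by rw [Tf, hmm]
  set t := Tf (m + 2) with ht_def2
  have ht0 : 0 ≤ t := by
    rw [ht_def]; exact pow_nonneg (div_nonneg hg0.le ha0.le) m
  have ht1 : t ≤ 1 := by
    rw [ht_def]
    apply pow_le_one₀ (div_nonneg hg0.le ha0.le)
    rw [div_le_one ha0]; linarith
  have hQ : γ ^ m = t * (2 - γ) ^ m := by
    rw [ht_def, div_pow, div_mul_cancel₀]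
    exact pow_ne_zero _ ha0.ne'
  have hP0 : (0:ℝ) < (2 - γ) ^ m := pow_pos ha0 m
  have hsγ : s * γ = 2 := by
    rw [hγ_def]; unfold Gf; rw [← hs_def]
    field_simp
  have hnγ : ((m + 2 : ℕ) : ℝ) * γ = 2 * s := by
    rw [← hss]; linear_combination s * hsγ
  have hU : Uf (m + 2) = (2 - γ) ^ 2 - γ ^ 2 * t := by
    unfold Uf; rw [← hγ_def, ← ht_def2]
  have hV : Vf (m + 2) = (2 - γ) * (1 - t) := by
    unfold Vf; rw [← hγ_def, ← ht_def2]
  clear_value t γ s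
  have hU0 : 0 < (2 - γ) ^ 2 - γ ^ 2 * t := by nlinarith
  have hV0 : 0 ≤ (2 - γ) * (1 - t) := by nlinarith
  have hDen : 2 * ((2 - γ) ^ (m+2) - γ ^ (m+2))
      + ((m + 2 : ℕ) : ℝ) * γ * (2 - γ) * ((2 - γ) ^ (m+2-2) - γ ^ (m+2-2))
      = (2 - γ) ^ m * (2 * ((2 - γ) ^ 2 - γ ^ 2 * t) + 2 * s * ((2 - γ) * (1 - t))) := by
    rw [hmm, hnγ, pow_add, pow_add, hQ]
    ring
  have hDen0 : 2 * ((2 - γ) ^ (m+2) - γ ^ (m+2))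
      + ((m + 2 : ℕ) : ℝ) * γ * (2 - γ) * ((2 - γ) ^ (m+2-2) - γ ^ (m+2-2)) ≠ 0 := by
    rw [hDen]
    have h2 : 0 < 2 * ((2 - γ) ^ 2 - γ ^ 2 * t) + 2 * s * ((2 - γ) * (1 - t)) := by
      nlinarith
    positivity
  have hNum : 2 * ((2 - γ) ^ (m+2) - γ ^ (m+2))
      + ((m + 2 : ℕ) : ℝ) * γ * (2 - γ) * ((2 - γ) ^ (m+2-2) - γ ^ (m+2-2))
      - ((m + 2 : ℕ) : ℝ) * γ * (1 - γ) * (2 - γ) * ((2 - γ) ^ (m+2-2) - γ ^ (m+2-2))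
      = (2 - γ) ^ m * (2 * ((2 - γ) ^ 2 - γ ^ 2 * t) + 4 * ((2 - γ) * (1 - t))) := by
    rw [hmm, hnγ, pow_add, pow_add, hQ]
    linear_combination (2 * (2 - γ) * ((2 - γ) ^ m) * (1 - t)) * hsγ
  rw [Hf, hU, hV, ← hs_def, one_sub_div hDen0, hNum, hDen]
  have hden2 : 0 < 2 * ((2 - γ) ^ 2 - γ ^ 2 * t) + 2 * s * ((2 - γ) * (1 - t)) := by
    nlinarith
  have hden3 : 0 < 2 * ((2 - γ) ^ 2 - γ ^ 2 * t) * s⁻¹ + 2 * ((2 - γ) * (1 - t)) := by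
    have hsi : 0 < s⁻¹ := inv_pos.2 hs0
    nlinarith
  field_simp

/-- with `γ_r = 2/√r`, `1 − μ(r, γ_r)` is asymptotic to `4/√r = 2γ_r`. -/
theorem rate_random_asymp
    (μ : ℕ → ℝ → ℝ)
    (hμ : ∀ (r : ℕ) (γ : ℝ), μ r γ =
      r * γ * (1-γ) * (2-γ) * ((2-γ)^(r-2) - γ^(r-2))
        / (2*((2-γ)^r - γ^r) + r * γ * (2-γ) * ((2-γ)^(r-2) - γ^(r-2)))) :
    Tendsto (fun r : ℕ => (1 - μ r (2 / Real.sqrt r)) * Real.sqrt r / 4)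
      atTop (nhds 1) := by
  apply Tendsto.congr' _ limH
  filter_upwards [eventually_ge_atTop 100] with n hn
  rw [hμ n (2 / Real.sqrt n)]
  exact (eqKey n hn).symm
end

section
/- Define μ(r, γ) := r·γ·(1−γ)·(2−γ)·((2−γ)^{r−2} − γ^{r−2}) / (2·((2−γ)^r − γ^r) + r·γ·(2−γ)·((2−γ)^{r−2} − γ^{r−2})). Then sup over integers r ≥ 3 and γ ∈ (0,1) of μ(r, γ) equals 1. -/
set_option maxHeartbeats 1000000

open Filter Topology

-- Upper bound: μ r γ ≤ 1 for r ≥ 3, γ ∈ (0,1).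
lemma mu_le_one (r : ℕ) (hr : 3 ≤ r) (γ : ℝ) (hγ0 : 0 < γ) (hγ1 : γ < 1) :
    r * γ * (1-γ) * (2-γ) * ((2-γ)^(r-2) - γ^(r-2))
        / (2*((2-γ)^r - γ^r) + r * γ * (2-γ) * ((2-γ)^(r-2) - γ^(r-2))) ≤ 1 := by
  have ha : (1:ℝ) < 2 - γ := by linarith
  have hγa : γ < 2 - γ := by linarith
  have hΔ : 0 < (2-γ)^(r-2) - γ^(r-2) := by
    have : γ^(r-2) < (2-γ)^(r-2) := by
      apply pow_lt_pow_left₀ hγa hγ0.le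
      omega
    linarith
  have hr0 : (0:ℝ) < r := by positivity
  have hP : 0 < (2-γ)^r - γ^r := by
    have : γ^r < (2-γ)^r := by
      apply pow_lt_pow_left₀ hγa hγ0.le
      omega
    linarith
  have hND : r * γ * (1-γ) * (2-γ) * ((2-γ)^(r-2) - γ^(r-2)) ≤
      2*((2-γ)^r - γ^r) + r * γ * (2-γ) * ((2-γ)^(r-2) - γ^(r-2)) := by
    nlinarith [mul_pos (mul_pos hr0 (mul_pos hγ0 hγ0)) (mul_pos (by linarith : (0:ℝ) < 2-γ) hΔ)]
  have hD : 0 < 2*((2-γ)^r - γ^r) + r * γ * (2-γ) * ((2-γ)^(r-2) - γ^(r-2)) := by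
    have : 0 < r * γ * (2-γ) * ((2-γ)^(r-2) - γ^(r-2)) := by
      apply mul_pos (mul_pos (mul_pos hr0 hγ0) (by linarith)) hΔ
    linarith
  exact (div_le_one hD).mpr hND

/-- the supremum over `r ≥ 3` and `γ ∈ (0,1)` of the rate of profit
`μ(r, 0, γA+(1−γ)B)` equals 1. -/
theorem sup_rate_random_eq_one
    (μ : ℕ → ℝ → ℝ)
    (hμ : ∀ (r : ℕ) (γ : ℝ), μ r γ =
      r * γ * (1-γ) * (2-γ) * ((2-γ)^(r-2) - γ^(r-2))
        / (2*((2-γ)^r - γ^r) + r * γ * (2-γ) * ((2-γ)^(r-2) - γ^(r-2)))) :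
    IsLUB {x : ℝ | ∃ r : ℕ, 3 ≤ r ∧ ∃ γ ∈ Set.Ioo (0:ℝ) 1, x = μ r γ} 1 := by
  constructor
  · rintro x ⟨r, hr, γ, ⟨hγ0, hγ1⟩, rfl⟩
    rw [hμ]
    exact mu_le_one r hr γ hγ0 hγ1
  · -- least upper bound
    intro b hb
    -- Step 1: for each γ ∈ (0,1), 1 - γ ≤ b
    have key : ∀ γ : ℝ, 0 < γ → γ < 1 → 1 - γ ≤ b := by
      intro γ hγ0 hγ1
      set a : ℝ := 2 - γ with ha_def
      have ha1 : (1:ℝ) < a := by simp [ha_def]; linarith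
      have ha0 : (0:ℝ) < a := by linarith
      have hγa : γ < a := by simp [ha_def]; linarith
      -- the reparametrized formula
      have hform : ∀ k : ℕ, μ (k+3) γ =
          (γ*(1-γ)*a*(1 - (γ/a)^(k+1))) /
          (2/((k:ℝ)+3)*(a^2 - γ^2 * (γ/a)^(k+1)) + γ*a*(1 - (γ/a)^(k+1))) := by
        intro k
        rw [hμ]
        have hrsub : (k+3) - 2 = k+1 := by omega
        rw [hrsub]
        have hc : ((k:ℝ)+3) * a^(k+1) ≠ 0 := by positivity
        have hk3 : ((k:ℝ)+3) ≠ 0 := by positivity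
        have hapow : (a:ℝ)^(k+1) ≠ 0 := by positivity
        have hN : ((k+3:ℕ):ℝ) * γ * (1-γ) * a * (a^(k+1) - γ^(k+1)) =
            (((k:ℝ)+3) * a^(k+1)) * (γ*(1-γ)*a*(1 - (γ/a)^(k+1))) := by
          push_cast
          rw [div_pow]
          field_simp
        have hD : 2*(a^(k+3) - γ^(k+3)) + ((k+3:ℕ):ℝ) * γ * a * (a^(k+1) - γ^(k+1)) =
            (((k:ℝ)+3) * a^(k+1)) *
            (2/((k:ℝ)+3)*(a^2 - γ^2 * (γ/a)^(k+1)) + γ*a*(1 - (γ/a)^(k+1))) := by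
          push_cast
          rw [div_pow]
          field_simp
          ring
        rw [hN, hD, mul_div_mul_left _ _ hc]
      -- limit of the reparametrized expression
      have hratio : |γ / a| < 1 := by
        rw [abs_of_pos (div_pos hγ0 ha0)]
        rw [div_lt_one ha0]
        exact hγa
      have ht : Tendsto (fun k : ℕ => (γ/a)^(k+1)) atTop (𝓝 0) := by
        have := tendsto_pow_atTop_nhds_zero_of_abs_lt_one hratio
        exact this.comp (tendsto_add_atTop_nat 1)
      have hs : Tendsto (fun k : ℕ => 2/((k:ℝ)+3)) atTop (𝓝 0) := by
        have : Tendsto (fun k : ℕ => ((k:ℝ)+3)) atTop atTop :=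
          tendsto_natCast_atTop_atTop.atTop_add tendsto_const_nhds
        simpa using this.const_div_atTop 2
      have h2 : Tendsto (fun k : ℕ => (1 - (γ/a)^(k+1))) atTop (𝓝 (1:ℝ)) := by
        have h := (tendsto_const_nhds (x := (1:ℝ))).sub ht
        rwa [sub_zero] at h
      have hnum : Tendsto (fun k : ℕ => γ*(1-γ)*a*(1 - (γ/a)^(k+1))) atTop
          (𝓝 (γ*(1-γ)*a)) := by
        have h := h2.const_mul (γ*(1-γ)*a)
        rwa [mul_one] at h
      have hden : Tendsto (fun k : ℕ =>
          2/((k:ℝ)+3)*(a^2 - γ^2 * (γ/a)^(k+1)) + γ*a*(1 - (γ/a)^(k+1))) atTop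
          (𝓝 (γ*a)) := by
        have h1 : Tendsto (fun k : ℕ => (a^2 - γ^2 * (γ/a)^(k+1))) atTop (𝓝 (a^2)) := by
          have h := (tendsto_const_nhds (x := a^2)).sub (ht.const_mul (γ^2))
          rwa [mul_zero, sub_zero] at h
        have h := (hs.mul h1).add (h2.const_mul (γ*a))
        rwa [zero_mul, mul_one, zero_add] at h
      have hγa0 : γ * a ≠ 0 := by positivity
      have hlim : Tendsto (fun k : ℕ => μ (k+3) γ) atTop (𝓝 (1-γ)) := by
        have := hnum.div hden hγa0
        have heq : γ*(1-γ)*a / (γ*a) = 1 - γ := by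
          field_simp
        rw [heq] at this
        simpa only [hform, Pi.div_def] using this
      -- each term is ≤ b
      have hmem : ∀ k : ℕ, μ (k+3) γ ≤ b := by
        intro k
        apply hb
        exact ⟨k+3, by omega, γ, ⟨hγ0, hγ1⟩, rfl⟩
      exact le_of_tendsto hlim (Filter.Eventually.of_forall hmem)
    -- Step 2: conclude 1 ≤ b
    by_contra hlt
    push_neg at hlt
    set ε := 1 - b with hε
    have hε0 : 0 < ε := by simp [hε]; linarith
    have : 0 < min (ε/2) (1/2) := by positivity
    have h2 := key (min (ε/2) (1/2)) this (by
      calc min (ε/2) (1/2) ≤ 1/2 := min_le_right _ _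
        _ < 1 := by norm_num)
    have : min (ε/2) (1/2) ≤ ε/2 := min_le_left _ _
    linarith
end

section
/- Let P be an irreducible, period-2 stochastic matrix on finite Σ with cyclic classes Σ₁ and Σ₂, stationary distribution π of P, and stationary distributions π₁, π₂ of P² on Σ₁, Σ₂. Define S₁ := {(i,j) ∈ Σ₁×Σ₂ : P(i,j) > 0} and the bivariate chain on S₁ with transition probabilities P*((i,j),(k,l)) := P(j,k)·P(k,l). Then the probability measure π₁* on S₁ defined by π₁*(i,j) := π₁(i)·P(i,j) is a stationary distribution of P*. -/
/-- the measure `π₁*(i,j) = π₁(i)P(i,j)` is a stationary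
distribution of the bivariate chain `P*((i,j),(k,l)) = P(j,k)P(k,l)`.  It is
supported on `S₁ = {(i,j) ∈ C₁×C₂ : P(i,j) > 0}`. -/
theorem bivariate_stationary {S : Type*} [Fintype S] [DecidableEq S]
    (P : Matrix S S ℝ)
    (hnonneg : ∀ i j, 0 ≤ P i j) (hrow : ∀ i, ∑ j, P i j = 1)
    (hirr : ∀ i j, ∃ m, 1 ≤ m ∧ 0 < (P ^ m) i j)
    (hper : ∀ (i : S) (d : ℕ), (∀ m, 1 ≤ m → 0 < (P ^ m) i i → d ∣ m) ↔ d ∣ 2)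
    (C₁ C₂ : Finset S) (hdisj : Disjoint C₁ C₂) (hcover : C₁ ∪ C₂ = Finset.univ)
    (halt : ∀ i j, 0 < P i j → (i ∈ C₁ ∧ j ∈ C₂) ∨ (i ∈ C₂ ∧ j ∈ C₁))
    (π π₁ π₂ : S → ℝ)
    (hπnonneg : ∀ i, 0 ≤ π i) (hπsum : ∑ i, π i = 1)
    (hπstat : ∀ j, ∑ i, π i * P i j = π j)
    (hπ₁nonneg : ∀ i, 0 ≤ π₁ i) (hπ₁sum : ∑ i, π₁ i = 1)
    (hπ₁stat : ∀ j, ∑ i, π₁ i * (P ^ 2) i j = π₁ j)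
    (hπ₁supp : ∀ i, i ∉ C₁ → π₁ i = 0)
    (hπ₂nonneg : ∀ i, 0 ≤ π₂ i) (hπ₂sum : ∑ i, π₂ i = 1)
    (hπ₂stat : ∀ j, ∑ i, π₂ i * (P ^ 2) i j = π₂ j)
    (hπ₂supp : ∀ i, i ∉ C₂ → π₂ i = 0)
    (Pstar : S × S → S × S → ℝ)
    (hPstar : ∀ x y, Pstar x y = P x.2 y.1 * P y.1 y.2)
    (ν : S × S → ℝ) (hν : ∀ x, ν x = π₁ x.1 * P x.1 x.2) :
    (∀ x, 0 ≤ ν x) ∧ (∑ x, ν x) = 1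
    ∧ (∀ x : S × S, ¬(x.1 ∈ C₁ ∧ x.2 ∈ C₂ ∧ 0 < P x.1 x.2) → ν x = 0)
    ∧ ∀ y : S × S, ∑ x, ν x * Pstar x y = ν y := by
  refine ⟨?_, ?_, ?_, ?_⟩
  · intro x; rw [hν]; exact mul_nonneg (hπ₁nonneg _) (hnonneg _ _)
  · simp only [hν, Fintype.sum_prod_type]
    simp only [← Finset.mul_sum, hrow, mul_one, hπ₁sum]
  · rintro ⟨i, j⟩ h
    rw [hν]
    by_contra hne
    have hπpos : π₁ i ≠ 0 := by intro h0; simp [h0] at hne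
    have hPpos : 0 < P i j :=
      lt_of_le_of_ne (hnonneg i j) (by intro h0; simp [← h0] at hne)
    have hi : i ∈ C₁ := by by_contra hi; exact hπpos (hπ₁supp i hi)
    rcases halt i j hPpos with ⟨_, hj⟩ | ⟨hi2, _⟩
    · exact h ⟨hi, hj, hPpos⟩
    · exact (Finset.disjoint_left.mp hdisj hi) hi2
  · rintro ⟨k, l⟩
    simp only [hν, hPstar, Fintype.sum_prod_type]
    have key : ∑ i, ∑ j, π₁ i * P i j * (P j k * P k l)
        = (∑ i, π₁ i * (P ^ 2) i k) * P k l := by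
      rw [Finset.sum_mul]
      refine Finset.sum_congr rfl fun i _ => ?_
      rw [pow_two, Matrix.mul_apply, Finset.mul_sum, Finset.sum_mul]
      exact Finset.sum_congr rfl fun j _ => by ring
    rw [key, hπ₁stat]
end

section
/- In the setting of the previous bivariate chain: the transition matrix P* on S₁ := {(i,j) ∈ Σ₁×Σ₂ : P(i,j) > 0} given by P*((i,j),(k,l)) := P(j,k)·P(k,l) is irreducible and aperiodic. -/
/-- the bivariate transition matrix
`P*((i,j),(k,l)) = P(j,k)P(k,l)` is irreducible and aperiodic on
`S₁ = {(i,j) ∈ C₁×C₂ : P(i,j) > 0}`. -/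
theorem bivariate_primitive {S : Type*} [Fintype S] [DecidableEq S]
    (P : Matrix S S ℝ)
    (hnonneg : ∀ i j, 0 ≤ P i j) (hrow : ∀ i, ∑ j, P i j = 1)
    (hirr : ∀ i j, ∃ m, 1 ≤ m ∧ 0 < (P ^ m) i j)
    (hper : ∀ (i : S) (d : ℕ), (∀ m, 1 ≤ m → 0 < (P ^ m) i i → d ∣ m) ↔ d ∣ 2)
    (C₁ C₂ : Finset S) (hdisj : Disjoint C₁ C₂) (hcover : C₁ ∪ C₂ = Finset.univ)
    (halt : ∀ i j, 0 < P i j → (i ∈ C₁ ∧ j ∈ C₂) ∨ (i ∈ C₂ ∧ j ∈ C₁))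
    (Pstar : Matrix (S × S) (S × S) ℝ)
    (hPstar : ∀ x y, Pstar x y = P x.2 y.1 * P y.1 y.2) :
    (∀ x y : S × S, (x.1 ∈ C₁ ∧ x.2 ∈ C₂ ∧ 0 < P x.1 x.2) →
      (y.1 ∈ C₁ ∧ y.2 ∈ C₂ ∧ 0 < P y.1 y.2) →
      ∃ m, 1 ≤ m ∧ 0 < (Pstar ^ m) x y)
    ∧ ∀ x : S × S, (x.1 ∈ C₁ ∧ x.2 ∈ C₂ ∧ 0 < P x.1 x.2) →
        ∀ d : ℕ, (∀ m, 1 ≤ m → 0 < (Pstar ^ m) x x → d ∣ m) → d ∣ 1 := by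
  classical
  -- nonnegativity of powers
  have hpn : ∀ n (i j : S), 0 ≤ (P ^ n) i j := by
    intro n
    induction n with
    | zero => intro i j; by_cases h : i = j <;> simp [pow_zero, Matrix.one_apply, h]
    | succ n ih =>
      intro i j
      rw [pow_succ, Matrix.mul_apply]
      exact Finset.sum_nonneg fun k _ => mul_nonneg (ih i k) (hnonneg k j)
  -- chaining positivity
  have chain : ∀ a b (i k j : S), 0 < (P ^ a) i k → 0 < (P ^ b) k j →
      0 < (P ^ (a + b)) i j := by
    intro a b i k j ha hb
    rw [pow_add, Matrix.mul_apply]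
    have h1 : 0 < (P ^ a) i k * (P ^ b) k j := mul_pos ha hb
    have h2 : (P ^ a) i k * (P ^ b) k j ≤ ∑ l, (P ^ a) i l * (P ^ b) l j :=
      Finset.single_le_sum (fun l _ => mul_nonneg (hpn a i l) (hpn b l j)) (Finset.mem_univ k)
    linarith
  -- splitting a positive path
  have split : ∀ n (i j : S), 0 < (P ^ (n+1)) i j → ∃ k, 0 < (P ^ n) i k ∧ 0 < P k j := by
    intro n i j h
    rw [pow_succ, Matrix.mul_apply] at h
    by_contra hc
    push_neg at hc
    have hle : ∑ k, (P ^ n) i k * P k j ≤ 0 := Finset.sum_nonpos (fun k _ => by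
      rcases lt_or_ge 0 ((P ^ n) i k) with h1 | h1
      · have h0 : P k j = 0 := le_antisymm (hc k h1) (hnonneg k j)
        simp [h0]
      · have h0 : (P ^ n) i k = 0 := le_antisymm h1 (hpn n i k)
        simp [h0])
    linarith
  -- membership dichotomy
  have mem12 : ∀ s : S, s ∈ C₁ ↔ s ∉ C₂ := by
    intro s
    constructor
    · intro h1 h2; exact (Finset.disjoint_left.mp hdisj) h1 h2
    · intro h2
      have hs : s ∈ C₁ ∪ C₂ := hcover ▸ Finset.mem_univ s
      rcases Finset.mem_union.mp hs with h | h
      · exact h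
      · exact absurd h h2
  -- parity of paths
  have parity : ∀ n (i j : S), 0 < (P ^ n) i j →
      ((Even n → (i ∈ C₁ ↔ j ∈ C₁)) ∧ (¬ Even n → (i ∈ C₁ ↔ j ∈ C₂))) := by
    intro n
    induction n with
    | zero =>
      intro i j h
      have hij : i = j := by
        by_contra hne
        rw [pow_zero, Matrix.one_apply_ne hne] at h
        exact lt_irrefl 0 h
      subst hij
      exact ⟨fun _ => Iff.rfl, fun h' => absurd Even.zero h'⟩
    | succ n ih =>
      intro i j h
      obtain ⟨k, hk1, hk2⟩ := split n i j h
      have H := ih i k hk1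
      have Hkj := halt k j hk2
      by_cases he : Even n
      · have h1 := H.1 he
        have hne : ¬ Even (n+1) := by simpa [Nat.even_add_one] using he
        refine ⟨fun h' => absurd h' hne, fun _ => ?_⟩
        rcases Hkj with ⟨hk, hj⟩ | ⟨hk, hj⟩
        · exact ⟨fun _ => hj, fun _ => h1.mpr hk⟩
        · constructor
          · intro hi; exact absurd hk ((mem12 k).mp (h1.mp hi))
          · intro hj2; exact absurd hj2 ((mem12 j).mp hj)
      · have h1 := H.2 he
        have heven : Even (n+1) := by simpa [Nat.even_add_one] using he
        refine ⟨fun _ => ?_, fun h' => absurd heven h'⟩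
        rcases Hkj with ⟨hk, hj⟩ | ⟨hk, hj⟩
        · constructor
          · intro hi; exact absurd (h1.mp hi) ((mem12 k).mp hk)
          · intro hj1; exact absurd hj ((mem12 j).mp hj1)
        · exact ⟨fun _ => hj, fun _ => h1.mpr hk⟩
  -- formula for powers of Pstar
  have star : ∀ m (x y : S × S),
      (Pstar ^ (m+1)) x y = (P ^ (2*m+1)) x.2 y.1 * P y.1 y.2 := by
    intro m
    induction m with
    | zero => intro x y; simp [pow_one, hPstar]
    | succ m ih =>
      intro x y
      rw [pow_succ Pstar (m+1), Matrix.mul_apply]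
      have h2 : 2*(m+1)+1 = (2*m+1) + 1 + 1 := by ring
      rw [h2, pow_succ P ((2*m+1)+1), pow_succ P (2*m+1), Matrix.mul_apply]
      rw [Fintype.sum_prod_type]
      simp only [ih, hPstar]
      rw [Finset.sum_comm, Finset.sum_mul]
      refine Finset.sum_congr rfl fun b _ => ?_
      rw [Matrix.mul_apply, Finset.sum_mul, Finset.sum_mul]
      refine Finset.sum_congr rfl fun a _ => ?_
      ring
  -- odd access times across the classes
  have odd_access : ∀ i j : S, i ∈ C₂ → j ∈ C₁ → ∃ k, 0 < (P ^ (2*k+1)) i j := by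
    intro i j hi hj
    obtain ⟨n, hn1, hn2⟩ := hirr i j
    have hodd : ¬ Even n := by
      intro he
      have := (parity n i j hn2).1 he
      exact (Finset.disjoint_left.mp hdisj) (this.mpr hj) hi
    obtain ⟨k, hk⟩ := Nat.not_even_iff_odd.mp hodd
    exact ⟨k, by rw [← hk]; exact hn2⟩
  constructor
  · -- irreducibility
    rintro x y ⟨hx1, hx2, hxP⟩ ⟨hy1, hy2, hyP⟩
    obtain ⟨k, hk⟩ := odd_access x.2 y.1 hx2 hy1
    refine ⟨k+1, Nat.le_add_left 1 k, ?_⟩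
    rw [star k x y]
    exact mul_pos hk hyP
  · -- aperiodicity
    rintro x ⟨hx1, hx2, hxP⟩ d hd
    obtain ⟨k, hk⟩ := odd_access x.2 x.1 hx2 hx1
    have hdk : d ∣ k + 1 := by
      apply hd (k+1) (Nat.le_add_left 1 k)
      rw [star k x x]
      exact mul_pos hk hxP
    have h2d : ∀ m, 1 ≤ m → 0 < (P ^ m) x.2 x.2 → 2*d ∣ m := by
      intro m hm hpos
      have heven : 2 ∣ m := (hper x.2 2).mpr dvd_rfl m hm hpos
      obtain ⟨s, hs⟩ := heven
      have hlong : 0 < (P ^ (2*(s+k)+1)) x.2 x.1 := by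
        have := chain m (2*k+1) x.2 x.2 x.1 hpos hk
        have hEq : m + (2*k+1) = 2*(s+k)+1 := by omega
        rwa [hEq] at this
      have hdsk : d ∣ s + k + 1 := by
        apply hd (s+k+1) (Nat.le_add_left 1 (s+k))
        rw [star (s+k) x x]
        exact mul_pos hlong hxP
      have hds : d ∣ s := by
        have := Nat.dvd_sub hdsk hdk
        simpa using this
      obtain ⟨t, ht⟩ := hds
      exact ⟨t, by rw [hs, ht]; ring⟩
    have h22 : 2*d ∣ 2 := (hper x.2 (2*d)).mp h2d
    have hd0 : d ≠ 0 := by rintro rfl; simpa using h22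
    have hdle : 2*d ≤ 2 := Nat.le_of_dvd (by norm_num) h22
    have : d = 1 := by omega
    simp [this]
end

section
/- For each even integer r ≥ 4 define s_r := ⌊log₂ r⌋ − 1 and μ_r := (1 − 2(s_r−1)/(r+2(s_r−1)))·(1 − 2^{−s_r}). Then (1 − μ_r)·r / (2 s_r) → 1 as r → ∞ along even integers; i.e., 1 − μ_r is asymptotic to 2s_r/r = 2(⌊log₂ r⌋−1)/r. -/
open Filter

private lemma natlog_tendsto : Tendsto (fun r : ℕ => Nat.log 2 r) atTop atTop := by
  refine tendsto_atTop_atTop.2 fun b => ⟨2 ^ b, fun r hr => ?_⟩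
  calc b = Nat.log 2 (2 ^ b) := (Nat.log_pow one_lt_two b).symm
    _ ≤ Nat.log 2 r := Nat.log_mono_right hr

/-- with `s_r = ⌊log₂ r⌋ − 1` and
`μ_r = (1 − 2(s_r−1)/(r+2(s_r−1)))(1 − 2^{−s_r})`, one has
`1 − μ_r ∼ 2 s_r / r` as `r → ∞` along even integers. -/
theorem rate_periodic_asymp
    (s : ℕ → ℕ) (hs : ∀ r, s r = Nat.log 2 r - 1)
    (μ : ℕ → ℝ) (hμ : ∀ r, μ r =
      (1 - 2*((s r : ℝ) - 1)/((r : ℝ) + 2*((s r : ℝ) - 1))) * (1 - (2:ℝ)^(-(s r : ℤ)))) :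
    Tendsto (fun r : ℕ => (1 - μ r) * (r : ℝ) / (2 * (s r : ℝ)))
      (atTop ⊓ 𝓟 {r : ℕ | Even r}) (nhds 1) := by
  -- it suffices to prove the limit along `atTop`
  refine Tendsto.mono_left ?_ inf_le_left
  set t : ℕ → ℝ := fun r => (s r : ℝ) with ht
  -- `s r → ∞`
  have hsT : Tendsto (fun r => s r) atTop atTop := by
    have : Tendsto (fun n : ℕ => n - 1) atTop atTop :=
      tendsto_atTop_atTop.2 fun b => ⟨b + 1, fun n hn => by omega⟩
    simpa [hs, Function.comp_def] using this.comp natlog_tendsto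
  have htT : Tendsto t atTop atTop := tendsto_natCast_atTop_atTop.comp hsT
  -- eventually `s r ≥ 1` (for `r ≥ 4`)
  have hev : ∀ᶠ r : ℕ in atTop, 1 ≤ s r := by
    filter_upwards [eventually_ge_atTop 4] with r hr
    have h2 : 2 ≤ Nat.log 2 r := by
      calc 2 = Nat.log 2 4 := by norm_num [Nat.log]
        _ ≤ Nat.log 2 r := Nat.log_mono_right hr
    rw [hs]; omega
  -- `1/t → 0`
  have hinv : Tendsto (fun r => 1 / t r) atTop (nhds 0) := by
    refine htT.inv_tendsto_atTop.congr fun r => ?_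
    simp [one_div]
  -- `t/x → 0`
  have htx : Tendsto (fun r => t r / (r : ℝ)) atTop (nhds 0) := by
    have hupper : Tendsto (fun r : ℕ => Real.log r / (r : ℝ) / Real.log 2) atTop (nhds 0) := by
      have := (Real.isLittleO_log_id_atTop.tendsto_div_nhds_zero).comp
        (tendsto_natCast_atTop_atTop (R := ℝ))
      simpa using this.div_const (Real.log 2)
    refine tendsto_of_tendsto_of_tendsto_of_le_of_le' tendsto_const_nhds hupper ?_ ?_
    · filter_upwards [eventually_ge_atTop 1] with r hr
      positivity
    · filter_upwards [eventually_ge_atTop 1] with r hr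
      have hr1 : (1 : ℝ) ≤ (r : ℝ) := by exact_mod_cast hr
      have h1 : t r ≤ Real.logb 2 r := by
        have := Real.natLog_le_logb r 2
        calc t r ≤ (Nat.log 2 r : ℝ) := by
              simp only [ht, hs]; exact_mod_cast Nat.sub_le _ _
          _ ≤ Real.logb 2 r := this
      have h2 : t r ≤ Real.log r / Real.log 2 := by rwa [Real.logb] at h1
      rw [div_right_comm]
      gcongr
  -- `u := 2(t-1)/x → 0`
  have hu : Tendsto (fun r => 2 * (t r - 1) / (r : ℝ)) atTop (nhds 0) := by
    have h1x : Tendsto (fun r : ℕ => 1 / (r : ℝ)) atTop (nhds 0) :=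
      tendsto_one_div_atTop_nhds_zero_nat
    have := ((htx.const_mul 2).sub (h1x.const_mul 2))
    simp only [mul_zero, sub_zero] at this
    refine this.congr fun r => ?_
    ring
  -- `C := x/(x+2(t-1)) → 1`
  have hC : Tendsto (fun r : ℕ => (r : ℝ) / ((r : ℝ) + 2 * (t r - 1))) atTop (nhds 1) := by
    have h1 : Tendsto (fun r : ℕ => (1 + 2 * (t r - 1) / (r : ℝ))⁻¹) atTop (nhds 1) := by
      have := (tendsto_const_nhds.add hu).inv₀ (by norm_num : (1 + 0 : ℝ) ≠ 0)
      simpa using this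
    refine h1.congr' ?_
    filter_upwards [eventually_ge_atTop 4, hev] with r hr hs1
    have hx : (4 : ℝ) ≤ (r : ℝ) := by exact_mod_cast hr
    have ht1 : (1 : ℝ) ≤ t r := by show (1:ℝ) ≤ (s r : ℝ); exact_mod_cast hs1
    have hden : (0 : ℝ) < (r : ℝ) + 2 * (t r - 1) := by nlinarith
    field_simp
  -- `A := (t-1)/t → 1`
  have hA : Tendsto (fun r => (t r - 1) / t r) atTop (nhds 1) := by
    have h1 : Tendsto (fun r => 1 - 1 / t r) atTop (nhds 1) := by
      simpa using tendsto_const_nhds.sub hinv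
    refine h1.congr' ?_
    filter_upwards [hev] with r hs1
    have ht1 : (1 : ℝ) ≤ t r := by show (1:ℝ) ≤ (s r : ℝ); exact_mod_cast hs1
    field_simp
  -- `D := 2^{-s} x / (2t) → 0`
  have hD : Tendsto (fun r : ℕ => (2:ℝ)^(-(s r : ℤ)) * (r : ℝ) / (2 * t r)) atTop (nhds 0) := by
    have hupper : Tendsto (fun r => 2 / t r) atTop (nhds 0) := by
      simpa [div_eq_mul_inv] using (hinv.const_mul 2)
    refine tendsto_of_tendsto_of_tendsto_of_le_of_le' tendsto_const_nhds hupper ?_ ?_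
    · filter_upwards [hev] with r hs1
      have ht1 : (1 : ℝ) ≤ t r := by show (1:ℝ) ≤ (s r : ℝ); exact_mod_cast hs1
      positivity
    · filter_upwards [eventually_ge_atTop 4, hev] with r hr hs1
      have ht1 : (1 : ℝ) ≤ t r := by show (1:ℝ) ≤ (s r : ℝ); exact_mod_cast hs1
      have hlog : 2 ≤ Nat.log 2 r := by
        calc 2 = Nat.log 2 4 := by norm_num [Nat.log]
          _ ≤ Nat.log 2 r := Nat.log_mono_right hr
      have hrlt : r < 2 ^ (s r + 2) := by
        have := Nat.lt_pow_succ_log_self (by norm_num : 1 < 2) r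
        have : r < 2 ^ (Nat.log 2 r + 1) := this
        rwa [show s r + 2 = Nat.log 2 r + 1 by rw [hs]; omega]
      have hrlt' : (r : ℝ) ≤ 4 * 2 ^ (s r) := by
        have : (r : ℝ) < (2 : ℝ) ^ (s r + 2) := by exact_mod_cast hrlt
        calc (r : ℝ) ≤ (2:ℝ) ^ (s r + 2) := this.le
          _ = 4 * 2 ^ (s r) := by rw [pow_add]; ring
      have hz : (2:ℝ)^(-(s r : ℤ)) = ((2:ℝ) ^ (s r))⁻¹ := by
        rw [zpow_neg, zpow_natCast]
      rw [hz, div_le_div_iff₀ (by positivity) (by positivity)]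
      have h2s : (0:ℝ) < 2 ^ (s r) := by positivity
      calc ((2:ℝ) ^ (s r))⁻¹ * (r : ℝ) * t r
          ≤ ((2:ℝ) ^ (s r))⁻¹ * (4 * 2 ^ (s r)) * t r := by
            apply mul_le_mul_of_nonneg_right _ (by linarith)
            exact mul_le_mul_of_nonneg_left hrlt' (by positivity)
        _ = 4 * t r := by field_simp
        _ = 2 * (2 * t r) := by ring
  -- combine
  have hfinal : Tendsto (fun r : ℕ =>
      (t r - 1) / t r * ((r : ℝ) / ((r : ℝ) + 2 * (t r - 1)))
      + (2:ℝ)^(-(s r : ℤ)) * (r : ℝ) / (2 * t r) * ((r : ℝ) / ((r : ℝ) + 2 * (t r - 1))))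
      atTop (nhds 1) := by
    have := (hA.mul hC).add (hD.mul hC)
    simpa using this
  refine hfinal.congr' ?_
  filter_upwards [eventually_ge_atTop 4, hev] with r hr hs1
  have hx : (4 : ℝ) ≤ (r : ℝ) := by exact_mod_cast hr
  have ht1 : (1 : ℝ) ≤ t r := by show (1:ℝ) ≤ (s r : ℝ); exact_mod_cast hs1
  have hden : (0 : ℝ) < (r : ℝ) + 2 * (t r - 1) := by nlinarith
  have htpos : (0 : ℝ) < t r := by linarith
  rw [hμ r]
  have hz : (2:ℝ)^(-(s r : ℤ)) = ((2:ℝ) ^ (s r))⁻¹ := by rw [zpow_neg, zpow_natCast]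
  rw [hz]
  have h2s : (0:ℝ) < 2 ^ (s r) := by positivity
  simp only [ht] at htpos hden ⊢
  field_simp
  have hX : (-2 + (s r : ℝ) * 2 + r) * (-2 + (s r : ℝ) * 2 + r)⁻¹ = 1 :=
    mul_inv_cancel₀ (ne_of_gt (by linarith))
  linear_combination hX
end
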